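/- Let m ≥ 5 be an integer, and let G ≤ GL(4,ℂ) be the subgroup generated by the 24 permutation matrices of the four coordinates together with all diagonal matrices diag(ε₁, ε₂, ε₃, ε₄) where each εᵢ is an m-th root of unity. Then: (1) G acts irreducibly on ℂ⁴; and (2) every homogeneous polynomial in ℂ[x,y,u,v] of degree 1, 2, or 3 that is a semi-invariant of G is zero. -/

import Mathlib

open Matrix MvPolynomial

/-- The subgroup of `GL(4, ℂ)` generated by the 24 permutation matrices of the four
coordinates together with all diagonal matrices whose entries are `m`-th roots of unity. -/
def fermatGroup (m : ℕ) : Subgroup (GL (Fin 4) ℂ) :=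
  Subgroup.closure
    {g | (∃ σ : Equiv.Perm (Fin 4),
        (g : Matrix (Fin 4) (Fin 4) ℂ) = Matrix.of fun i j => if i = σ j then 1 else 0) ∨
      (∃ ε : Fin 4 → ℂ, (∀ i, ε i ^ m = 1) ∧
        (g : Matrix (Fin 4) (Fin 4) ℂ) = Matrix.diagonal ε)}

section aux

/-- Permutation matrix. -/
def permM (σ : Equiv.Perm (Fin 4)) : Matrix (Fin 4) (Fin 4) ℂ :=
  Matrix.of fun i j => if i = σ j then 1 else 0

lemma permM_mul (σ τ : Equiv.Perm (Fin 4)) : permM σ * permM τ = permM (σ * τ) := by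
  ext i j
  simp [permM, Matrix.mul_apply, ite_mul, Equiv.eq_symm_apply]
  congr

lemma permM_one : permM 1 = 1 := by
  ext i j; simp [permM, Matrix.one_apply, eq_comm]; congr

lemma permM_mulVec (σ : Equiv.Perm (Fin 4)) (v : Fin 4 → ℂ) :
    (permM σ).mulVec v = fun i => v (σ⁻¹ i) := by
  funext i
  simp only [permM, Matrix.mulVec, dotProduct, Matrix.of_apply, ite_mul, one_mul, zero_mul]
  rw [Finset.sum_eq_single (σ⁻¹ i)]
  · simp
  · intro j _ hj; rw [if_neg]; intro h; exact hj (by simp [h])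
  · simp

/-- Permutation matrix as an element of `GL`. -/
def permGL (σ : Equiv.Perm (Fin 4)) : GL (Fin 4) ℂ :=
  ⟨permM σ, permM σ⁻¹, by rw [permM_mul, mul_inv_cancel, permM_one],
    by rw [permM_mul, inv_mul_cancel, permM_one]⟩

lemma permGL_mem (m : ℕ) (σ : Equiv.Perm (Fin 4)) : permGL σ ∈ fermatGroup m :=
  Subgroup.subset_closure (Or.inl ⟨σ, rfl⟩)

/-- Diagonal matrix with nonzero entries as an element of `GL`. -/
noncomputable def diagGL (ε : Fin 4 → ℂ) (h : ∀ i, ε i ≠ 0) : GL (Fin 4) ℂ :=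
  ⟨Matrix.diagonal ε, Matrix.diagonal (fun i => (ε i)⁻¹),
    by rw [diagonal_mul_diagonal]; convert Matrix.diagonal_one; exact mul_inv_cancel₀ (h _),
    by rw [diagonal_mul_diagonal]; convert Matrix.diagonal_one; exact inv_mul_cancel₀ (h _)⟩

lemma diagGL_mem (m : ℕ) (ε : Fin 4 → ℂ) (h : ∀ i, ε i ≠ 0) (hroot : ∀ i, ε i ^ m = 1) :
    diagGL ε h ∈ fermatGroup m :=
  Subgroup.subset_closure (Or.inr ⟨ε, hroot, rfl⟩)

/-- Coefficient consequence of a coordinatewise-scaling semi-invariance. -/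
lemma scale_coeff {c : Fin 4 → ℂ} {f : MvPolynomial (Fin 4) ℂ} {t : ℂ}
    (h : ∀ v : Fin 4 → ℂ, eval (fun k => c k * v k) f = t * eval v f)
    (a : Fin 4 →₀ ℕ) : (∏ k, c k ^ a k) * coeff a f = t * coeff a f := by
  set g : MvPolynomial (Fin 4) ℂ :=
    ∑ b ∈ f.support, monomial b ((∏ k, c k ^ b k) * coeff b f) with hg
  have hgeval : ∀ v : Fin 4 → ℂ, eval v g = eval (fun k => c k * v k) f := by
    intro v
    rw [hg, map_sum, eval_eq' (fun k => c k * v k) f]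
    refine Finset.sum_congr rfl fun b _ => ?_
    rw [eval_monomial, Finsupp.prod_fintype _ _ (fun i => pow_zero _)]
    simp_rw [mul_pow]
    rw [Finset.prod_mul_distrib]
    ring
  have hgf : g = C t * f := by
    apply MvPolynomial.funext
    intro v
    rw [hgeval, h v]
    simp
  have := congrArg (coeff a) hgf
  rw [coeff_C_mul, hg, coeff_sum] at this
  simp_rw [coeff_monomial] at this
  by_cases ha : a ∈ f.support
  · rwa [Finset.sum_ite_eq' f.support a _ , if_pos ha] at this
  · have : coeff a f = 0 := by simpa using ha
    rw [this, mul_zero, mul_zero]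

end aux

/-- For `m ≥ 5`, the group generated by the coordinate permutation matrices and
the diagonal matrices with `m`-th root of unity entries acts irreducibly on `ℂ⁴` and has no
nonzero homogeneous semi-invariants of degree 1, 2 or 3. -/
theorem stmt_10 (m : ℕ) (hm : 5 ≤ m) :
    (∀ W : Submodule ℂ (Fin 4 → ℂ),
      (∀ g ∈ fermatGroup m, ∀ v ∈ W, Matrix.mulVec (g : Matrix (Fin 4) (Fin 4) ℂ) v ∈ W) →
      W = ⊥ ∨ W = ⊤) ∧
    (∀ (f : MvPolynomial (Fin 4) ℂ) (d : ℕ), 1 ≤ d → d ≤ 3 → f.IsHomogeneous d →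
      (∃ χ : fermatGroup m →* ℂˣ, ∀ (g : fermatGroup m) (v : Fin 4 → ℂ),
        MvPolynomial.eval
            (Matrix.mulVec (((g : GL (Fin 4) ℂ)⁻¹ : GL (Fin 4) ℂ) : Matrix (Fin 4) (Fin 4) ℂ) v) f
          = (χ g : ℂ) * MvPolynomial.eval v f) →
      f = 0) := by
  have hm0 : m ≠ 0 := by omega
  obtain ⟨ζ, hζ⟩ : ∃ ζ : ℂ, IsPrimitiveRoot ζ m :=
    ⟨_, Complex.isPrimitiveRoot_exp m hm0⟩
  have hζm : ζ ^ m = 1 := hζ.pow_eq_one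
  have hζ0 : ζ ≠ 0 := fun h => by
    have := hζm; rw [h, zero_pow hm0] at this; exact zero_ne_one this
  have hζ1 : ζ ≠ 1 := by
    intro h
    have := hζ.pow_inj (i := 0) (j := 1) (by omega) (by omega) (by simp [h])
    omega
  -- the single-coordinate scaling family
  have diagScale : ∀ (i : Fin 4) (z : ℂ) (hz : z ≠ 0) (hzm : z ^ m = 1),
      ∃ D : fermatGroup m,
        ((D : GL (Fin 4) ℂ) : Matrix (Fin 4) (Fin 4) ℂ)
          = Matrix.diagonal (fun k => if k = i then z else 1) ∧
        (((D : GL (Fin 4) ℂ)⁻¹ : GL (Fin 4) ℂ) : Matrix (Fin 4) (Fin 4) ℂ)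
          = Matrix.diagonal (fun k => if k = i then z⁻¹ else 1) := by
    intro i z hz hzm
    have hne : ∀ k, (if k = i then z else 1) ≠ 0 := by
      intro k; split <;> simp [hz]
    refine ⟨⟨diagGL _ hne, diagGL_mem m _ hne fun k => ?_⟩, rfl, ?_⟩
    · split <;> simp [hzm]
    · show Matrix.diagonal (fun k => (if k = i then z else 1)⁻¹) = _
      have he : (fun k => (if k = i then z else 1)⁻¹)
          = fun k => if k = i then z⁻¹ else 1 := by
        funext k; split <;> simp
      rw [he]
  constructor
  · -- irreducibility
    intro W hW
    by_cases hbot : W = ⊥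
    · exact Or.inl hbot
    right
    obtain ⟨v, hvW, hv0⟩ := Submodule.exists_mem_ne_zero_of_ne_bot hbot
    obtain ⟨i, hvi⟩ : ∃ i, v i ≠ 0 := by
      by_contra h; push_neg at h; exact hv0 (funext h)
    -- get Pi.single i 1 ∈ W
    obtain ⟨D, hD, -⟩ := diagScale i ζ hζ0 hζm
    have h1 : Matrix.mulVec ((D : GL (Fin 4) ℂ) : Matrix (Fin 4) (Fin 4) ℂ) v - v ∈ W :=
      sub_mem (hW _ D.2 v hvW) hvW
    have h2 : Matrix.mulVec ((D : GL (Fin 4) ℂ) : Matrix (Fin 4) (Fin 4) ℂ) v - v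
        = ((ζ - 1) * v i) • (Pi.single i 1 : Fin 4 → ℂ) := by
      funext k
      rw [hD]
      simp only [Pi.sub_apply, Pi.smul_apply, Matrix.mulVec_diagonal, smul_eq_mul]
      by_cases hk : k = i
      · subst hk; simp; ring
      · simp [hk, Pi.single_eq_of_ne hk]
    have h3 : (Pi.single i 1 : Fin 4 → ℂ) ∈ W := by
      have hc : ((ζ - 1) * v i) ≠ 0 := mul_ne_zero (sub_ne_zero.mpr hζ1) hvi
      have := W.smul_mem ((ζ - 1) * v i)⁻¹ (h2 ▸ h1)
      rwa [smul_smul, inv_mul_cancel₀ hc, one_smul] at this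
    have h4 : ∀ j : Fin 4, (Pi.single j 1 : Fin 4 → ℂ) ∈ W := by
      intro j
      have := hW _ (permGL_mem m (Equiv.swap i j)) _ h3
      have he : Matrix.mulVec ((permGL (Equiv.swap i j) : GL (Fin 4) ℂ) :
          Matrix (Fin 4) (Fin 4) ℂ) (Pi.single i 1) = (Pi.single j 1 : Fin 4 → ℂ) := by
        show Matrix.mulVec (permM (Equiv.swap i j)) _ = _
        rw [permM_mulVec]
        funext k
        by_cases hk : k = j
        · subst hk
          rw [Pi.single_eq_same, Equiv.swap_inv, Equiv.swap_apply_right, Pi.single_eq_same]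
        · rw [Pi.single_eq_of_ne hk]
          rw [Pi.single_eq_of_ne]
          intro h
          apply hk
          have : (Equiv.swap i j) ((Equiv.swap i j)⁻¹ k) = (Equiv.swap i j) i := by rw [h]
          simpa [Equiv.swap_apply_left] using this
      rwa [he] at this
    rw [eq_top_iff]
    intro w _
    rw [pi_eq_sum_univ w]
    refine Submodule.sum_mem W fun j _ => Submodule.smul_mem W _ ?_
    have : (fun k => if j = k then (1:ℂ) else 0) = (Pi.single j 1 : Fin 4 → ℂ) := by
      funext k; rw [Pi.single_apply]; simp [eq_comm]
    rw [this]; exact h4 j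
  · -- no low-degree semi-invariants
    intro f d hd1 hd3 hhom ⟨χ, hχ⟩
    by_contra hf
    -- Step 1: all exponents agree, so f is a monomial
    have key : ∀ a ∈ f.support, ∀ b ∈ f.support, a = b := by
      intro a ha b hb
      ext i
      obtain ⟨D, -, hDinv⟩ := diagScale i ζ hζ0 hζm
      have hev : ∀ v : Fin 4 → ℂ,
          eval (fun k => (if k = i then ζ⁻¹ else 1) * v k) f = ((χ D : ℂˣ) : ℂ) * eval v f := by
        intro v
        have := hχ D v
        rwa [hDinv, show Matrix.mulVec (Matrix.diagonal fun k => if k = i then ζ⁻¹ else 1) v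
            = fun k => (if k = i then ζ⁻¹ else 1) * v k from funext fun k =>
              Matrix.mulVec_diagonal _ _ _] at this
      have hprod : ∀ e : Fin 4 →₀ ℕ,
          (∏ k, (if k = i then ζ⁻¹ else 1) ^ e k) = (ζ⁻¹) ^ e i := by
        intro e
        rw [Finset.prod_eq_single i (fun k _ hk => by simp [hk]) (by simp)]
        simp
      have hca := scale_coeff hev a
      have hcb := scale_coeff hev b
      rw [hprod] at hca hcb
      have hfa : coeff a f ≠ 0 := by simpa using ha
      have hfb : coeff b f ≠ 0 := by simpa using hb
      have hai : (ζ⁻¹) ^ a i = ((χ D : ℂˣ) : ℂ) := mul_right_cancel₀ hfa hca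
      have hbi : (ζ⁻¹) ^ b i = ((χ D : ℂˣ) : ℂ) := mul_right_cancel₀ hfb hcb
      -- bound exponents by d < m
      have hdeg : ∀ e ∈ f.support, ∀ k, e k ≤ d := by
        intro e he k
        have hsum : (e.sum fun _ n => n) = d := by
          have := hhom (mem_support_iff.mp he)
          simpa [Finsupp.weight_apply] using this
        calc e k ≤ e.sum fun _ n => n := by
              rw [Finsupp.sum_fintype _ _ (fun _ => rfl)]
              exact Finset.single_le_sum (f := fun k => e k) (fun _ _ => Nat.zero_le _)
                (Finset.mem_univ k)
          _ = d := hsum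
      have h3m : (3:ℕ) < m := by omega
      have h1lt : a i < m := lt_of_le_of_lt (le_trans (hdeg a ha i) hd3) h3m
      have h2lt : b i < m := lt_of_le_of_lt (le_trans (hdeg b hb i) hd3) h3m
      exact (hζ.inv).pow_inj h1lt h2lt (hai.trans hbi.symm)
    -- so f = monomial a r
    obtain ⟨a, ha⟩ : ∃ a, a ∈ f.support := by
      rcases Finset.eq_empty_or_nonempty f.support with h | h
      · exact absurd (by simpa using h) hf
      · exact h
    have hsingle : f = monomial a (coeff a f) := by
      ext b
      rw [coeff_monomial]
      by_cases hb : b ∈ f.support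
      · rw [if_pos (key a ha b hb)]
        rw [key a ha b hb]
      · rw [mem_support_iff, not_not] at hb
        rw [hb]
        split
        · next h => rw [← h] at hb; rw [hb]
        · rfl
    set r := coeff a f with hr
    have hr0 : r ≠ 0 := by simpa using ha
    -- degree facts
    have hasum : (a.sum fun _ n => n) = d := by
      have := hhom (mem_support_iff.mp ha)
      simpa [Finsupp.weight_apply] using this
    have hsumuniv : ∑ k, a k = d := by
      rw [← hasum, Finsupp.sum_fintype _ _ (fun _ => rfl)]
    obtain ⟨i, hi⟩ : ∃ i, 1 ≤ a i := by
      by_contra h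
      push_neg at h
      have : ∑ k, a k = 0 := Finset.sum_eq_zero fun k _ => by have := h k; omega
      omega
    obtain ⟨j, hj⟩ : ∃ j, a j = 0 := by
      by_contra h
      push_neg at h
      have : ∀ k : Fin 4, 1 ≤ a k := fun k => Nat.one_le_iff_ne_zero.mpr (h k)
      have : (4 : ℕ) ≤ ∑ k : Fin 4, a k := by
        calc (4:ℕ) = ∑ _k : Fin 4, 1 := by simp
          _ ≤ ∑ k : Fin 4, a k := Finset.sum_le_sum fun k _ => this k
      omega
    have hij : i ≠ j := fun h => by rw [h] at hi; omega
    -- use the swap permutation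
    set σ := Equiv.swap i j with hσ
    set g : fermatGroup m := ⟨permGL σ, permGL_mem m σ⟩ with hgdef
    have hinv : (((g : GL (Fin 4) ℂ)⁻¹ : GL (Fin 4) ℂ) : Matrix (Fin 4) (Fin 4) ℂ)
        = permM σ⁻¹ := rfl
    -- evaluate at v = indicator of complement of j
    set v : Fin 4 → ℂ := fun k => if k = j then 0 else 1 with hv
    have hev := hχ g v
    rw [hinv, permM_mulVec] at hev
    have hL : eval (fun k => v (σ⁻¹⁻¹ k)) f = 0 := by
      rw [hsingle, eval_monomial]
      rw [Finsupp.prod_fintype _ _ (fun _ => pow_zero _)]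
      have : v (σ⁻¹⁻¹ i) ^ a i = 0 := by
        have : σ⁻¹⁻¹ i = j := by simp [hσ, Equiv.swap_apply_left]
        rw [this, hv]
        simp
        exact fun h => absurd h (by omega)
      rw [Finset.prod_eq_zero (Finset.mem_univ i) this, mul_zero]
    have hR : eval v f = r := by
      rw [hsingle, eval_monomial]
      rw [Finsupp.prod_fintype _ _ (fun _ => pow_zero _)]
      have : ∀ k, v k ^ a k = 1 := by
        intro k
        by_cases hk : k = j
        · subst hk; rw [hv]; simp [hj]
        · rw [hv]; simp [hk]
      rw [Finset.prod_congr rfl fun k _ => this k]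
      simp
    rw [hL, hR] at hev
    exact hr0 (by
      have : ((χ g : ℂˣ) : ℂ) ≠ 0 := Units.ne_zero _
      field_simp at hev
      rcases mul_eq_zero.mp hev.symm with h | h <;> tauto)
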